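/- Let Φ ∈ ℝ^{n×D}, Y ∈ ℝ^n, λ > 0, and let Ψ ∈ ℝ^{D×D} be symmetric positive definite with λ_min(Ψ) ≥ Λ₀ > 0. Assume λ_min(ΦΦ^⊤) ≥ λ₀ > 0 and that Φ^⊤Φ and Ψ commute. Let W* = (Φ^⊤Φ + λΨ)^{−1}Φ^⊤Y and let W : ℝ → ℝ^D be differentiable and satisfy the gradient flow equation W'(t) = −(Φ^⊤Φ W(t) − Φ^⊤Y + λΨ W(t)) for all t ≥ 0. Then for all t ≥ 0, (d/dt)‖Φ W(t) − Φ W*‖₂² ≤ −(2λ₀ + 2λΛ₀) · ‖Φ W(t) − Φ W*‖₂². -/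

import Mathlib

open Matrix

private lemma diag_fun_comm {m : Type*} [Fintype m] [DecidableEq m]
    (d : m → ℝ) (f : ℝ → ℝ) (C : Matrix m m ℝ)
    (h : Matrix.diagonal d * C = C * Matrix.diagonal d) :
    Matrix.diagonal (f ∘ d) * C = C * Matrix.diagonal (f ∘ d) := by
  ext i j
  have h' : d i * C i j = C i j * d j := by
    simpa [Matrix.diagonal_mul, Matrix.mul_diagonal] using
      congrFun (congrFun h i) j
  rw [Matrix.diagonal_mul, Matrix.mul_diagonal]
  by_cases hd : d i = d j
  · simp [Function.comp, hd, mul_comm]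
  · have hC : C i j = 0 := by
      have : (d i - d j) * C i j = 0 := by ring_nf; linarith [h']
      rcases mul_eq_zero.1 this with h0 | h0
      · exact absurd (by linarith : d i = d j) hd
      · exact h0
    simp [hC]

private noncomputable def psdSqrt {m : Type*} [Fintype m] [DecidableEq m]
    {A : Matrix m m ℝ} (hA : A.PosSemidef) : Matrix m m ℝ :=
  (hA.1.eigenvectorUnitary : Matrix m m ℝ) * Matrix.diagonal (Real.sqrt ∘ hA.1.eigenvalues)
    * star (hA.1.eigenvectorUnitary : Matrix m m ℝ)

private lemma psdSqrt_mul_self {m : Type*} [Fintype m] [DecidableEq m]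
    {A : Matrix m m ℝ} (hA : A.PosSemidef) : psdSqrt hA * psdSqrt hA = A := by
  set U : Matrix m m ℝ := (hA.1.eigenvectorUnitary : Matrix m m ℝ) with hUdef
  have hU1 : star U * U = 1 := Matrix.mem_unitaryGroup_iff'.mp hA.1.eigenvectorUnitary.2
  have hofReal : (RCLike.ofReal ∘ hA.1.eigenvalues : m → ℝ) = hA.1.eigenvalues := by
    funext i; simp [RCLike.ofReal]
  have hspec : A = U * Matrix.diagonal hA.1.eigenvalues * star U := by
    have := hA.1.spectral_theorem
    rwa [Unitary.conjStarAlgAut_apply, hofReal] at this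
  have hdd : Matrix.diagonal (Real.sqrt ∘ hA.1.eigenvalues)
      * Matrix.diagonal (Real.sqrt ∘ hA.1.eigenvalues) = Matrix.diagonal hA.1.eigenvalues := by
    rw [Matrix.diagonal_mul_diagonal]
    congr 1
    funext i
    exact Real.mul_self_sqrt (hA.eigenvalues_nonneg i)
  calc psdSqrt hA * psdSqrt hA
      = U * Matrix.diagonal (Real.sqrt ∘ hA.1.eigenvalues) * (star U * U)
          * Matrix.diagonal (Real.sqrt ∘ hA.1.eigenvalues) * star U := by
        simp only [psdSqrt, hUdef, Matrix.mul_assoc]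
    _ = A := by rw [hU1, Matrix.mul_one, Matrix.mul_assoc U, hdd, ← hspec]

private lemma psdSqrt_transpose {m : Type*} [Fintype m] [DecidableEq m]
    {A : Matrix m m ℝ} (hA : A.PosSemidef) : (psdSqrt hA).transpose = psdSqrt hA := by
  simp only [psdSqrt, Matrix.transpose_mul, Matrix.diagonal_transpose, Matrix.star_eq_conjTranspose,
    Matrix.conjTranspose_eq_transpose_of_trivial, Matrix.transpose_transpose, Matrix.mul_assoc]

private lemma commute_sqrt {m : Type*} [Fintype m] [DecidableEq m]
    {A B : Matrix m m ℝ} (hA : A.PosSemidef) (h : A * B = B * A) :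
    (psdSqrt hA) * B = B * (psdSqrt hA) := by
  set U : Matrix m m ℝ := (hA.1.eigenvectorUnitary : Matrix m m ℝ) with hUdef
  have hU1 : star U * U = 1 := Matrix.mem_unitaryGroup_iff'.mp hA.1.eigenvectorUnitary.2
  have hU2 : U * star U = 1 := Matrix.mem_unitaryGroup_iff.mp hA.1.eigenvectorUnitary.2
  set d : m → ℝ := hA.1.eigenvalues with hddef
  have key : ∀ X Y : Matrix m m ℝ,
      (U * X * star U) * (U * Y * star U) = U * (X * Y) * star U := by
    intro X Y
    calc (U * X * star U) * (U * Y * star U)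
        = U * X * (star U * U) * Y * star U := by noncomm_ring
      _ = U * (X * Y) * star U := by rw [hU1]; simp only [Matrix.mul_one]; noncomm_ring
  have hofReal : (RCLike.ofReal ∘ d : m → ℝ) = d := by
    funext i; simp [RCLike.ofReal]
  have hspec : A = U * Matrix.diagonal d * star U := by
    have := hA.1.spectral_theorem
    rwa [Unitary.conjStarAlgAut_apply, hofReal] at this
  set C : Matrix m m ℝ := star U * B * U with hCdef
  have hB : B = U * C * star U := by
    calc B = (U * star U) * B * (U * star U) := by rw [hU2]; simp
      _ = U * (star U * B * U) * star U := by noncomm_ring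
  have hdiagC : Matrix.diagonal d * C = C * Matrix.diagonal d := by
    have h2 : (U * Matrix.diagonal d * star U) * (U * C * star U)
        = (U * C * star U) * (U * Matrix.diagonal d * star U) := by
      rw [← hspec, ← hB, h]
    rw [key, key] at h2
    have hcancel : ∀ X Y : Matrix m m ℝ, U * X * star U = U * Y * star U → X = Y := by
      intro X Y hxy
      have := congrArg (fun Z => star U * Z * U) hxy
      simpa only [Matrix.mul_assoc] using by
        have h3 : star U * (U * X * star U) * U = X := by
          calc star U * (U * X * star U) * U
              = (star U * U) * X * (star U * U) := by noncomm_ring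
            _ = X := by rw [hU1]; simp
        have h4 : star U * (U * Y * star U) * U = Y := by
          calc star U * (U * Y * star U) * U
              = (star U * U) * Y * (star U * U) := by noncomm_ring
            _ = Y := by rw [hU1]; simp
        rw [← h3, ← h4, hxy]
    exact hcancel _ _ h2
  have hdiagC' := diag_fun_comm d Real.sqrt C hdiagC
  have hsqrt : (psdSqrt hA) = U * Matrix.diagonal (Real.sqrt ∘ d) * star U := by
    have hco : (RCLike.ofReal ∘ Real.sqrt ∘ hA.1.eigenvalues : m → ℝ) = Real.sqrt ∘ d := by
      funext i; simp [hddef, RCLike.ofReal]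
    rfl
  rw [hsqrt]
  conv_lhs => rw [hB]
  conv_rhs => rw [hB]
  rw [key, key, hdiagC']

private lemma dot_mul_psd {m : Type*} [Fintype m] [DecidableEq m]
    {A B : Matrix m m ℝ} (hA : A.PosSemidef) (hB : B.PosSemidef)
    (h : A * B = B * A) (x : m → ℝ) :
    0 ≤ dotProduct x ((A * B).mulVec x) := by
  have hS : (psdSqrt hA) * (psdSqrt hA) = A := psdSqrt_mul_self hA
  have hSB : (psdSqrt hA) * B = B * (psdSqrt hA) := commute_sqrt hA h
  have hfact : A * B = (psdSqrt hA) * B * (psdSqrt hA) := by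
    rw [hSB, Matrix.mul_assoc, hS, ← h]
  have hsymm : (psdSqrt hA).transpose = (psdSqrt hA) := by
    exact psdSqrt_transpose hA
  rw [hfact]
  have : dotProduct x (((psdSqrt hA) * B * (psdSqrt hA)).mulVec x)
      = dotProduct ((psdSqrt hA).mulVec x) (B.mulVec ((psdSqrt hA).mulVec x)) := by
    rw [← Matrix.mulVec_mulVec, ← Matrix.mulVec_mulVec, Matrix.dotProduct_mulVec x (psdSqrt hA),
      ← hsymm, Matrix.vecMul_transpose, hsymm]
  rw [this]
  simpa using hB.dotProduct_mulVec_nonneg ((psdSqrt hA).mulVec x)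

private lemma dot_mulVec_left {p q : Type*} [Fintype p] [Fintype q]
    (M : Matrix p q ℝ) (x : q → ℝ) (w : p → ℝ) :
    dotProduct (M.mulVec x) w = dotProduct x (M.transpose.mulVec w) := by
  rw [Matrix.dotProduct_mulVec x M.transpose, Matrix.vecMul_transpose]


/-- Let `Φ ∈ ℝ^{n×D}`, `Y ∈ ℝ^n`, `λ > 0`, and `Ψ ∈ ℝ^{D×D}` symmetric
positive definite with `λ_min(Ψ) ≥ Λ₀ > 0` (expressed via the quadratic form).  Assume
`λ_min(ΦΦ^⊤) ≥ λ₀ > 0` and that `Φ^⊤Φ` and `Ψ` commute.  Let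
`W* = (Φ^⊤Φ + λΨ)^{−1}Φ^⊤Y` and let `W : ℝ → ℝ^D` satisfy the gradient flow equation
`W'(t) = −(Φ^⊤Φ W(t) − Φ^⊤Y + λΨ W(t))` for all `t ≥ 0`.  Then for all `t ≥ 0`,
`(d/dt)‖Φ W(t) − Φ W*‖₂² ≤ −(2λ₀ + 2λΛ₀)·‖Φ W(t) − Φ W*‖₂²`. -/
theorem krr_gradient_flow_derivative (n D : ℕ)
    (Φ : Matrix (Fin n) (Fin D) ℝ) (Y : Fin n → ℝ)
    (lam : ℝ) (hlam : 0 < lam)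
    (Ψ : Matrix (Fin D) (Fin D) ℝ) (hΨ : Ψ.PosDef)
    (Λ₀ : ℝ) (hΛ₀ : 0 < Λ₀)
    (hΨmin : ∀ v : Fin D → ℝ,
      Λ₀ * dotProduct v v ≤ dotProduct v (Ψ.mulVec v))
    (lam₀ : ℝ) (hlam₀ : 0 < lam₀)
    (hΦmin : ∀ v : Fin n → ℝ,
      lam₀ * dotProduct v v
        ≤ dotProduct v ((Φ * Φ.transpose).mulVec v))
    (hcomm : Commute (Φ.transpose * Φ) Ψ)
    (Wstar : Fin D → ℝ)
    (hWstar : Wstar = (Φ.transpose * Φ + lam • Ψ)⁻¹.mulVec (Φ.transpose.mulVec Y))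
    (W : ℝ → Fin D → ℝ)
    (hW : ∀ t : ℝ, 0 ≤ t →
      HasDerivAt W
        (-((Φ.transpose * Φ).mulVec (W t) - Φ.transpose.mulVec Y
            + lam • Ψ.mulVec (W t))) t) :
    ∀ t : ℝ, 0 ≤ t →
      deriv (fun s => ∑ i, (Φ.mulVec (W s) i - Φ.mulVec Wstar i) ^ 2) t
        ≤ -(2 * lam₀ + 2 * lam * Λ₀)
            * ∑ i, (Φ.mulVec (W t) i - Φ.mulVec Wstar i) ^ 2 := by
  intro t ht
  set A : Matrix (Fin D) (Fin D) ℝ := Φ.transpose * Φ with hAdef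
  set M : Matrix (Fin D) (Fin D) ℝ := A + lam • Ψ with hMdef
  set c : Fin D → ℝ := Φ.transpose.mulVec Y with hcdef
  -- A is positive semidefinite
  have hApsd : A.PosSemidef := by
    have h0 := Matrix.posSemidef_conjTranspose_mul_self Φ
    have hct : Φ.conjTranspose = Φ.transpose := by
      ext i j; simp [Matrix.conjTranspose_apply]
    rwa [hct] at h0
  -- M is positive definite
  have hMpd : M.PosDef := by
    have hsmul : (lam • Ψ).PosDef := hΨ.smul hlam
    exact Matrix.PosDef.posSemidef_add hApsd hsmul
  have hdet : IsUnit M.det := by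
    simpa [isUnit_iff_ne_zero] using hMpd.det_pos.ne'
  have hMW : M.mulVec Wstar = c := by
    rw [hWstar, Matrix.mulVec_mulVec, Matrix.mul_nonsing_inv _ hdet, Matrix.one_mulVec]
  set e : Fin D → ℝ := W t - Wstar with hedef
  set V : Fin D → ℝ := -(M.mulVec e) with hVdef
  have hMe : M.mulVec e = A.mulVec (W t) - c + lam • Ψ.mulVec (W t) := by
    rw [hedef, Matrix.mulVec_sub, hMW, hMdef, Matrix.add_mulVec, Matrix.smul_mulVec]
    abel
  have hWd : HasDerivAt W V t := by
    rw [hVdef, hMe]; exact hW t ht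
  have hWdj : ∀ j, HasDerivAt (fun s => W s j) (V j) t := fun j => hasDerivAt_pi.1 hWd j
  have hcomp : ∀ i, HasDerivAt (fun s => Φ.mulVec (W s) i - Φ.mulVec Wstar i)
      ((Φ.mulVec V) i) t := by
    intro i
    have h1 : HasDerivAt (fun s => ∑ j, Φ i j * W s j) (∑ j, Φ i j * V j) t :=
      HasDerivAt.fun_sum (fun j _ => (hWdj j).const_mul (Φ i j))
    have h2 : (fun s => ∑ j, Φ i j * W s j) = fun s => Φ.mulVec (W s) i := by
      funext s; simp [Matrix.mulVec, dotProduct]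
    have h3 : (∑ j, Φ i j * V j) = Φ.mulVec V i := by
      simp [Matrix.mulVec, dotProduct]
    rw [h2, h3] at h1
    exact h1.sub_const _
  have hF : HasDerivAt (fun s => ∑ i, (Φ.mulVec (W s) i - Φ.mulVec Wstar i) ^ 2)
      (∑ i, 2 * (Φ.mulVec (W t) i - Φ.mulVec Wstar i) ^ 1 * Φ.mulVec V i) t := by
    apply HasDerivAt.fun_sum
    intro i _
    have h4 := (hcomp i).fun_pow 2
    simpa using h4
  rw [hF.deriv]
  -- rewrite in terms of Φ e
  have hu : ∀ i, Φ.mulVec (W t) i - Φ.mulVec Wstar i = (Φ.mulVec e) i := by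
    intro i
    rw [hedef, Matrix.mulVec_sub]
    rfl
  simp only [hu]
  set q : ℝ := dotProduct (Φ.mulVec e) (Φ.mulVec e) with hqdef
  have hQ : ∑ i, (Φ.mulVec e) i ^ 2 = q := by
    rw [hqdef]; simp [dotProduct, pow_two]
  set S : ℝ := dotProduct (Φ.mulVec e) (Φ.mulVec (M.mulVec e)) with hSdef
  have hLHS : ∑ i, 2 * (Φ.mulVec e) i ^ 1 * Φ.mulVec V i = -2 * S := by
    rw [hSdef, hVdef, Matrix.mulVec_neg, dotProduct, Finset.mul_sum]
    apply Finset.sum_congr rfl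
    intro i _
    simp only [Pi.neg_apply, pow_one]
    ring
  rw [hLHS, hQ]
  -- Key lower bound on S
  have hS1 : S = dotProduct e ((A * M).mulVec e) := by
    rw [hSdef, dot_mulVec_left, hAdef, ← Matrix.mulVec_mulVec, ← Matrix.mulVec_mulVec]
  have hT1 : lam₀ * q ≤ dotProduct e ((A * A).mulVec e) := by
    have hAA : A * A = Φ.transpose * ((Φ * Φ.transpose) * Φ) := by
      rw [hAdef]; simp only [Matrix.mul_assoc]
    rw [hAA, ← Matrix.mulVec_mulVec, ← dot_mulVec_left, ← Matrix.mulVec_mulVec]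
    exact hΦmin (Φ.mulVec e)
  set B₀ : Matrix (Fin D) (Fin D) ℝ := Ψ - Λ₀ • 1 with hB₀def
  have hB₀psd : B₀.PosSemidef := by
    refine Matrix.PosSemidef.of_dotProduct_mulVec_nonneg ?_ ?_
    · show B₀.conjTranspose = B₀
      rw [hB₀def, Matrix.conjTranspose_sub, Matrix.conjTranspose_smul, hΨ.1,
        Matrix.conjTranspose_one]
      simp
    · intro x
      have h5 := hΨmin x
      simp only [hB₀def, Matrix.sub_mulVec, Matrix.smul_mulVec, Matrix.one_mulVec,
        dotProduct_sub, dotProduct_smul, smul_eq_mul, star_trivial]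
      linarith
  have hcommB : A * B₀ = B₀ * A := by
    rw [hB₀def, mul_sub, sub_mul, hcomm.eq, Matrix.mul_smul, Matrix.smul_mul, mul_one, one_mul]
  have hT2a : 0 ≤ dotProduct e ((A * B₀).mulVec e) := dot_mul_psd hApsd hB₀psd hcommB e
  have hAe : dotProduct e (A.mulVec e) = q := by
    rw [hqdef, hAdef, ← Matrix.mulVec_mulVec, ← dot_mulVec_left]
  have hT2 : Λ₀ * q ≤ dotProduct e ((A * Ψ).mulVec e) := by
    have hsplit : A * Ψ = A * B₀ + Λ₀ • A := by
      rw [hB₀def, mul_sub, Matrix.mul_smul, mul_one]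
      abel
    rw [hsplit, Matrix.add_mulVec, dotProduct_add, Matrix.smul_mulVec,
      dotProduct_smul, smul_eq_mul, hAe]
    linarith
  have hSsplit : S = dotProduct e ((A * A).mulVec e)
      + lam * dotProduct e ((A * Ψ).mulVec e) := by
    rw [hS1, hMdef, mul_add, Matrix.mul_smul, Matrix.add_mulVec, dotProduct_add,
      Matrix.smul_mulVec, dotProduct_smul, smul_eq_mul]
  have hlamT2 : lam * (Λ₀ * q) ≤ lam * dotProduct e ((A * Ψ).mulVec e) :=
    mul_le_mul_of_nonneg_left hT2 hlam.le
  nlinarith [hT1, hlamT2, hSsplit]
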